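/- Orthogonality condition: for unit covectors u ≠ ±v, the following are equivalent: (i) ⟨u,v⟩ = 0; (ii) for every momentum p with ⟨p,u⟩ < 0 and ⟨p,v⟩ < 0, one has Γ(u)Γ(v) = Γ(v)Γ(u) applied to p and the resulting momentum p_f = p Γ(u)Γ(v) is feasible (⟨p_f,u⟩ ≥ 0 and ⟨p_f,v⟩ ≥ 0). -/

import Mathlib

open Matrix

noncomputable def kin {n : ℕ} (M : Matrix (Fin n) (Fin n) ℝ)
    (x y : Matrix (Fin 1) (Fin n) ℝ) : ℝ :=
  (x * M⁻¹ * yᵀ) 0 0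

noncomputable def Gam {n : ℕ} (M : Matrix (Fin n) (Fin n) ℝ)
    (u : Matrix (Fin 1) (Fin n) ℝ) : Matrix (Fin n) (Fin n) ℝ :=
  1 - (2 / kin M u u) • (M⁻¹ * uᵀ * u)

lemma one1 {n : ℕ} (A : Matrix (Fin 1) (Fin 1) ℝ) (u : Matrix (Fin 1) (Fin n) ℝ) :
    A * u = A 0 0 • u := by
  ext i j
  have : i = 0 := Subsingleton.elim i 0
  subst this
  simp [Matrix.mul_apply, Fin.sum_univ_one]

lemma mulGam {n : ℕ} (M : Matrix (Fin n) (Fin n) ℝ) (u p : Matrix (Fin 1) (Fin n) ℝ)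
    (huu : kin M u u = 1) :
    p * Gam M u = p - (2 * kin M p u) • u := by
  rw [Gam, huu, div_one, Matrix.mul_sub, Matrix.mul_one, Matrix.mul_smul]
  congr 1
  rw [show p * (M⁻¹ * uᵀ * u) = (p * M⁻¹ * uᵀ) * u by rw [← Matrix.mul_assoc, ← Matrix.mul_assoc]]
  rw [one1, smul_smul]
  rfl

lemma kin_sub_left {n : ℕ} (M : Matrix (Fin n) (Fin n) ℝ) (x y w : Matrix (Fin 1) (Fin n) ℝ) :
    kin M (x - y) w = kin M x w - kin M y w := by
  simp [kin, Matrix.sub_mul]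

lemma kin_add_left {n : ℕ} (M : Matrix (Fin n) (Fin n) ℝ) (x y w : Matrix (Fin 1) (Fin n) ℝ) :
    kin M (x + y) w = kin M x w + kin M y w := by
  simp [kin, Matrix.add_mul]

lemma kin_neg_left {n : ℕ} (M : Matrix (Fin n) (Fin n) ℝ) (x w : Matrix (Fin 1) (Fin n) ℝ) :
    kin M (-x) w = -kin M x w := by
  simp [kin, Matrix.neg_mul]

lemma kin_smul_left {n : ℕ} (M : Matrix (Fin n) (Fin n) ℝ) (a : ℝ) (x w : Matrix (Fin 1) (Fin n) ℝ) :
    kin M (a • x) w = a * kin M x w := by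
  simp [kin, Matrix.smul_mul]

lemma kin_symm {n : ℕ} (M : Matrix (Fin n) (Fin n) ℝ) (hM : M.PosDef)
    (x y : Matrix (Fin 1) (Fin n) ℝ) : kin M x y = kin M y x := by
  have hMt : Mᵀ = M := by
    ext i j
    simpa using congrFun (congrFun hM.isHermitian.eq i) j
  have hMi : (M⁻¹)ᵀ = M⁻¹ := by
    rw [Matrix.transpose_nonsing_inv, hMt]
  have : (x * M⁻¹ * yᵀ)ᵀ = y * M⁻¹ * xᵀ := by
    rw [Matrix.transpose_mul, Matrix.transpose_mul, Matrix.transpose_transpose, hMi,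
      Matrix.mul_assoc]
  calc kin M x y = (x * M⁻¹ * yᵀ)ᵀ 0 0 := rfl
    _ = kin M y x := by rw [this]; rfl

lemma kin_pos {n : ℕ} (M : Matrix (Fin n) (Fin n) ℝ) (hM : M.PosDef)
    (w : Matrix (Fin 1) (Fin n) ℝ) (hw : w ≠ 0) : 0 < kin M w w := by
  have h0 : w 0 ≠ 0 := by
    intro h
    apply hw
    ext i j
    have : i = 0 := Subsingleton.elim i 0
    subst this
    simp [congrFun h j]
  have := hM.inv.dotProduct_mulVec_pos h0
  calc (0:ℝ) < (w 0) ⬝ᵥ (M⁻¹ *ᵥ (w 0)) := by simpa using this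
    _ = kin M w w := by
      simp [kin, dotProduct, Matrix.mulVec, Matrix.mul_apply, Finset.mul_sum, Finset.sum_mul]
      rw [Finset.sum_comm]
      apply Finset.sum_congr rfl
      intro i _
      apply Finset.sum_congr rfl
      intro j _
      ring

theorem orthogonality_condition {n : ℕ}
    (M : Matrix (Fin n) (Fin n) ℝ) (hM : M.PosDef)
    (u v : Matrix (Fin 1) (Fin n) ℝ)
    (huu : kin M u u = 1) (hvv : kin M v v = 1)
    (huv : u ≠ v) (huv' : u ≠ -v) :
    kin M u v = 0 ↔
      ∀ p : Matrix (Fin 1) (Fin n) ℝ, kin M p u < 0 → kin M p v < 0 →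
        p * Gam M u * Gam M v = p * Gam M v * Gam M u ∧
        0 ≤ kin M (p * Gam M u * Gam M v) u ∧
        0 ≤ kin M (p * Gam M u * Gam M v) v := by
  have hvu : kin M v u = kin M u v := kin_symm M hM v u
  constructor
  · intro hc p hpu hpv
    set a := kin M p u with ha
    set b := kin M p v with hb
    have h1 : p * Gam M u = p - (2 * a) • u := mulGam M u p huu
    have h2 : kin M (p - (2 * a) • u) v = b := by
      rw [kin_sub_left, kin_smul_left, hc]; ring
    have h3 : p * Gam M u * Gam M v = p - (2 * a) • u - (2 * b) • v := by
      rw [h1, mulGam M v _ hvv, h2]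
    have h1' : p * Gam M v = p - (2 * b) • v := mulGam M v p hvv
    have h2' : kin M (p - (2 * b) • v) u = a := by
      rw [kin_sub_left, kin_smul_left, hvu, hc]; ring
    have h3' : p * Gam M v * Gam M u = p - (2 * b) • v - (2 * a) • u := by
      rw [h1', mulGam M u _ huu, h2']
    refine ⟨by rw [h3, h3']; abel, ?_, ?_⟩
    · rw [h3, kin_sub_left, kin_sub_left, kin_smul_left, kin_smul_left, huu, hvu, hc]
      nlinarith
    · rw [h3, kin_sub_left, kin_sub_left, kin_smul_left, kin_smul_left, hvv, hc]
      nlinarith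
  · intro h
    set c := kin M u v with hc
    have huv2 : u + v ≠ 0 := fun h0 => huv' (by rw [eq_neg_of_add_eq_zero_left h0])
    have hpos : 0 < kin M (u + v) (u + v) := kin_pos M hM _ huv2
    have hexp : kin M (u + v) (u + v) = 2 + 2 * c := by
      have : (u + v)ᵀ = uᵀ + vᵀ := Matrix.transpose_add u v
      rw [kin_add_left]
      have e1 : kin M u (u + v) = 1 + c := by
        simp only [kin, this, Matrix.mul_add, Matrix.add_apply]
        rw [show (u * M⁻¹ * uᵀ) 0 0 = kin M u u from rfl,
          show (u * M⁻¹ * vᵀ) 0 0 = kin M u v from rfl, huu]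
      have e2 : kin M v (u + v) = c + 1 := by
        simp only [kin, this, Matrix.mul_add, Matrix.add_apply]
        rw [show (v * M⁻¹ * uᵀ) 0 0 = kin M v u from rfl,
          show (v * M⁻¹ * vᵀ) 0 0 = kin M v v from rfl, hvv, hvu]
      rw [e1, e2]; ring
    have hcgt : -1 < c := by rw [hexp] at hpos; linarith
    set p := -u - v with hp
    have hpu : kin M p u = -(1 + c) := by
      rw [hp, kin_sub_left, kin_neg_left, huu, hvu]; ring
    have hpv : kin M p v = -(1 + c) := by
      rw [hp, kin_sub_left, kin_neg_left, hc.symm, hvv]; ring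
    have ha : -(1 + c) < 0 := by linarith
    obtain ⟨hE, -, -⟩ := h p (hpu ▸ ha) (hpv ▸ ha)
    set a : ℝ := -(1 + c) with haa
    have h2 : kin M (p - (2 * a) • u) v = a - 2 * a * c := by
      rw [kin_sub_left, kin_smul_left, hpv]
    have h2' : kin M (p - (2 * a) • v) u = a - 2 * a * c := by
      rw [kin_sub_left, kin_smul_left, hpu, hvu]
    rw [mulGam M u p huu, mulGam M v p hvv, hpu, hpv,
      mulGam M v _ hvv, mulGam M u _ huu, h2, h2'] at hE
    have key : (4 * a * c) • (u - v) = 0 := by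
      linear_combination (norm := module) -hE
    rcases smul_eq_zero.mp key with h0 | h0
    · exact (mul_eq_zero.mp h0).resolve_left (by intro h1; simp only [haa] at h1; linarith)
    · exact absurd (sub_eq_zero.mp h0) huv
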